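/- Let N be a finite set with |N| = n ≥ 3. For any two simple graphs x and y on the vertex set N with identical degree distributions (n_j(x) = n_j(y) for all j ≥ 0), the number of subgraphs of x isomorphic to K_{n−1}∖{e} (the complete graph on n−1 vertices with one edge removed) equals the number of subgraphs of y isomorphic to K_{n−1}∖{e}. That is, σ_{K_{n−1}∖{e}}(x) is a function of the degree distribution of x alone. -/

import Mathlib

/-- The number of (not necessarily induced) subgraphs of `x` isomorphic to `U`. -/
noncomputable def subCount {W V : Type*} (U : SimpleGraph W) (x : SimpleGraph V) : ℕ :=
  Nat.card {H : x.Subgraph // Nonempty (H.coe ≃g U)}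

/-- The `k`-star: the vertex `0` (the hub) is adjacent to the `k` other vertices,
and there are no other edges. -/
def starGraph (k : ℕ) : SimpleGraph (Fin (k + 1)) where
  Adj a b := a ≠ b ∧ (a = 0 ∨ b = 0)
  symm := by
    constructor
    rintro a b ⟨hne, h⟩
    exact ⟨hne.symm, h.symm⟩
  loopless := by
    constructor
    rintro a ⟨hne, _⟩
    exact hne rfl

/-- The disjoint union of two edges: four vertices and two edges sharing no endpoint. -/
def twoEdges : SimpleGraph (Fin 4) :=
  SimpleGraph.fromRel (fun a b => (a = 0 ∧ b = 1) ∨ (a = 2 ∧ b = 3))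

/-- The complete graph on `m` vertices with one edge (between `0` and `1`) removed. -/
def compMinusEdge (m : ℕ) : SimpleGraph (Fin m) :=
  (⊤ : SimpleGraph (Fin m)) \ SimpleGraph.fromRel (fun a b => a.val = 0 ∧ b.val = 1)

/-- The degree of the vertex `v` in the graph `x`. -/
noncomputable def deg {V : Type*} (x : SimpleGraph V) (v : V) : ℕ :=
  Nat.card {w : V // x.Adj v w}

/-- `nDeg x j` is the number of vertices of `x` having degree `j`
(the degree distribution of `x`). -/
noncomputable def nDeg {V : Type*} (x : SimpleGraph V) (j : ℕ) : ℕ :=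
  Nat.card {v : V // deg x v = j}

section Aux

open Finset
open scoped Classical


variable {V : Type*} [Fintype V] [DecidableEq V]

private lemma sym2_exists (z : Sym2 V) : ∃ a b : V, z = s(a, b) :=
  Sym2.ind (fun a b => ⟨a, b, rfl⟩) z

/-- Admissible pairs: a vertex `v` (the excluded one) together with a pair `p` within
`V \ {v}` (the missing edge), such that every other pair within `V \ {v}` is an edge. -/
noncomputable def Tset (x : SimpleGraph V) : Finset (V × Sym2 V) :=
  univ.filter fun q => ¬q.2.IsDiag ∧ q.1 ∉ q.2 ∧
    ∀ u w : V, u ≠ w → u ≠ q.1 → w ≠ q.1 → s(u, w) ≠ q.2 → x.Adj u w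

lemma mem_Tset {x : SimpleGraph V} {v : V} {p : Sym2 V} :
    (v, p) ∈ Tset x ↔ ¬p.IsDiag ∧ v ∉ p ∧
      ∀ u w : V, u ≠ w → u ≠ v → w ≠ v → s(u, w) ≠ p → x.Adj u w := by
  simp [Tset]

/-- The subgraph associated to an admissible pair. -/
noncomputable def mkSub (x : SimpleGraph V) (v : V) (p : Sym2 V)
    (h : (v, p) ∈ Tset x) : x.Subgraph where
  verts := {u | u ≠ v}
  Adj u w := u ≠ w ∧ u ≠ v ∧ w ≠ v ∧ s(u, w) ≠ p
  adj_sub := fun h' => (mem_Tset.mp h).2.2 _ _ h'.1 h'.2.1 h'.2.2.1 h'.2.2.2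
  edge_vert := fun h' => h'.2.1
  symm := ⟨fun u w h' =>
    ⟨h'.1.symm, h'.2.2.1, h'.2.1, by rw [Sym2.eq_swap]; exact h'.2.2.2⟩⟩

lemma mkSub_adj {x : SimpleGraph V} {v : V} {p : Sym2 V} {h : (v, p) ∈ Tset x}
    {u w : V} : (mkSub x v p h).Adj u w ↔ u ≠ w ∧ u ≠ v ∧ w ≠ v ∧ s(u, w) ≠ p :=
  Iff.rfl

lemma exists_equiv_fin {α : Type*} [Fintype α] [DecidableEq α] {k : ℕ}
    (hcard : Fintype.card α = k + 2) (a b : α) (hab : a ≠ b) :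
    ∃ e : α ≃ Fin (k + 2), e a = 0 ∧ e b = 1 := by
  let e0 := Fintype.equivFinOfCardEq hcard
  let e1 := e0.trans (Equiv.swap (e0 a) 0)
  have h1a : e1 a = 0 := by simp [e1]
  have hb0 : e1 b ≠ 0 := by
    rw [← h1a]
    exact fun hcon => hab (e1.injective hcon).symm
  have h01 : (0 : Fin (k + 2)) ≠ 1 := by simp [Fin.ext_iff]
  refine ⟨e1.trans (Equiv.swap (e1 b) 1), ?_, ?_⟩
  · show Equiv.swap (e1 b) 1 (e1 a) = 0
    rw [h1a]
    exact Equiv.swap_apply_of_ne_of_ne (Ne.symm hb0) h01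
  · exact Equiv.swap_apply_left _ _

lemma compMinusEdge_adj {k : ℕ} (c d : Fin (k + 2)) :
    (compMinusEdge (k + 2)).Adj c d ↔
      c ≠ d ∧ ¬((c = 0 ∧ d = 1) ∨ (d = 0 ∧ c = 1)) := by
  have h0 : ∀ e : Fin (k + 2), e.val = 0 ↔ e = 0 := fun e =>
    ⟨fun h => Fin.ext (by rw [h, Fin.val_zero]), fun h => by rw [h, Fin.val_zero]⟩
  have h1 : ∀ e : Fin (k + 2), e.val = 1 ↔ e = 1 := fun e => by
    simp [Fin.ext_iff]
  simp only [compMinusEdge, SimpleGraph.sdiff_adj, SimpleGraph.top_adj,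
    SimpleGraph.fromRel_adj, h0, h1]
  tauto

lemma card_setOf_ne {k : ℕ} (hV : Fintype.card V = k + 3) (v : V) :
    Fintype.card ↥({u : V | u ≠ v}) = k + 2 := by
  have h1 : Fintype.card ↥({u : V | u ≠ v}) = Fintype.card {u : V // u ≠ v} :=
    Fintype.card_congr (Equiv.subtypeEquivRight fun u => Iff.rfl)
  rw [h1, Fintype.card_subtype]
  have h2 : (univ.filter fun u : V => u ≠ v) = univ.erase v := Finset.filter_ne' univ v
  rw [h2, Finset.card_erase_of_mem (mem_univ v), Finset.card_univ, hV]
  omega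

lemma mkSub_iso (x : SimpleGraph V) {k : ℕ} (hV : Fintype.card V = k + 3)
    (v : V) (p : Sym2 V) (h : (v, p) ∈ Tset x) :
    Nonempty ((mkSub x v p h).coe ≃g compMinusEdge (k + 2)) := by
  obtain ⟨hd, hv, hall⟩ := mem_Tset.mp h
  obtain ⟨a, b, rfl⟩ := sym2_exists p
  have hab : a ≠ b := fun hcon => hd (Sym2.mk_isDiag_iff.mpr hcon)
  have ha : a ≠ v := fun hcon => hv (Sym2.mem_iff.mpr (Or.inl hcon.symm))
  have hb : b ≠ v := fun hcon => hv (Sym2.mem_iff.mpr (Or.inr hcon.symm))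
  set H := mkSub x v s(a, b) h with hH
  have hcard : Fintype.card ↥H.verts = k + 2 := by
    have e : ↥H.verts ≃ {u : V // u ≠ v} := Equiv.subtypeEquivRight (fun u => Iff.rfl)
    rw [Fintype.card_congr e, Fintype.card_subtype, Finset.filter_ne' univ v,
      Finset.card_erase_of_mem (mem_univ v), Finset.card_univ, hV]
    omega
  have hab' : (⟨a, ha⟩ : ↥H.verts) ≠ ⟨b, hb⟩ := fun hcon => hab (Subtype.ext_iff.mp hcon)
  obtain ⟨e, he0, he1⟩ := exists_equiv_fin hcard ⟨a, ha⟩ ⟨b, hb⟩ hab'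
  refine ⟨⟨e, ?_⟩⟩
  intro u w
  have hu : (↑u : V) ≠ v := u.prop
  have hw : (↑w : V) ≠ v := w.prop
  have k0 : ∀ z : ↥H.verts, e z = 0 ↔ (z : V) = a := fun z => by
    rw [← he0, EmbeddingLike.apply_eq_iff_eq, Subtype.ext_iff]
  have k1 : ∀ z : ↥H.verts, e z = 1 ↔ (z : V) = b := fun z => by
    rw [← he1, EmbeddingLike.apply_eq_iff_eq, Subtype.ext_iff]
  have kne : e u = e w ↔ (u : V) = (w : V) := by
    rw [EmbeddingLike.apply_eq_iff_eq, Subtype.ext_iff]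
  rw [compMinusEdge_adj, SimpleGraph.Subgraph.coe_adj]
  rw [show H.Adj ↑u ↑w ↔ ((↑u : V) ≠ ↑w ∧ (↑u : V) ≠ v ∧ (↑w : V) ≠ v ∧
      s((↑u : V), (↑w : V)) ≠ s(a, b)) from Iff.rfl]
  simp only [ne_eq, kne, k0 u, k0 w, k1 u, k1 w, Sym2.eq_iff]
  tauto

/-- The bijection from admissible pairs to subgraphs isomorphic to `K_{k+2}` minus an edge. -/
noncomputable def gMap (x : SimpleGraph V) {k : ℕ} (hV : Fintype.card V = k + 3)
    (q : {q : V × Sym2 V // q ∈ Tset x}) :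
    {H : x.Subgraph // Nonempty (H.coe ≃g compMinusEdge (k + 2))} :=
  ⟨mkSub x q.1.1 q.1.2 q.2, mkSub_iso x hV _ _ _⟩

lemma gMap_injective (x : SimpleGraph V) {k : ℕ} (hV : Fintype.card V = k + 3) :
    Function.Injective (gMap x hV) := by
  rintro ⟨⟨v1, p1⟩, h1⟩ ⟨⟨v2, p2⟩, h2⟩ hEq
  have hS : mkSub x v1 p1 h1 = mkSub x v2 p2 h2 := congrArg Subtype.val hEq
  have hverts : {u : V | u ≠ v1} = {u : V | u ≠ v2} :=
    congrArg SimpleGraph.Subgraph.verts hS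
  have hv : v1 = v2 := by
    by_contra hne
    have hm : v1 ∈ {u : V | u ≠ v2} := hne
    rw [← hverts] at hm
    exact hm rfl
  subst hv
  obtain ⟨hd, hvp, _⟩ := mem_Tset.mp h1
  obtain ⟨a, b, rfl⟩ := sym2_exists p1
  have hab : a ≠ b := fun hcon => hd (Sym2.mk_isDiag_iff.mpr hcon)
  have ha : a ≠ v1 := fun hcon => hvp (Sym2.mem_iff.mpr (Or.inl hcon.symm))
  have hb : b ≠ v1 := fun hcon => hvp (Sym2.mem_iff.mpr (Or.inr hcon.symm))
  have hAdj : (mkSub x v1 s(a, b) h1).Adj a b ↔ (mkSub x v1 p2 h2).Adj a b := by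
    rw [hS]
  rw [mkSub_adj, mkSub_adj] at hAdj
  have hp : s(a, b) = p2 := by
    by_contra hne
    exact (hAdj.mpr ⟨hab, ha, hb, hne⟩).2.2.2 rfl
  exact Subtype.ext (Prod.ext rfl hp)

lemma gMap_surjective (x : SimpleGraph V) {k : ℕ} (hV : Fintype.card V = k + 3) :
    Function.Surjective (gMap x hV) := by
  rintro ⟨H, ⟨φ⟩⟩
  have hcard : Fintype.card ↥H.verts = k + 2 := by
    have hc := Fintype.card_congr φ.toEquiv
    simpa using hc
  have hc2 : H.verts.toFinset.card = k + 2 := by rw [Set.toFinset_card]; exact hcard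
  have hcompl : (univ \ H.verts.toFinset).card = 1 := by
    rw [Finset.card_sdiff_of_subset (subset_univ _), Finset.card_univ, hV, hc2]
    omega
  obtain ⟨v, hv⟩ := Finset.card_eq_one.mp hcompl
  have hverts : H.verts = {u : V | u ≠ v} := by
    ext u
    constructor
    · intro hu hcon
      have h1 : u ∈ H.verts.toFinset := Set.mem_toFinset.mpr hu
      have h2 : u ∈ univ \ H.verts.toFinset := by
        rw [hv]
        exact hcon ▸ Finset.mem_singleton_self v
      exact (Finset.mem_sdiff.mp h2).2 h1
    · intro hu
      by_contra hcon
      have h1 : u ∈ univ \ H.verts.toFinset :=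
        Finset.mem_sdiff.mpr ⟨mem_univ u, fun hc => hcon (Set.mem_toFinset.mp hc)⟩
      rw [hv, Finset.mem_singleton] at h1
      exact hu h1
  have h01 : (0 : Fin (k + 2)) ≠ 1 := by simp [Fin.ext_iff]
  set va : V := ↑(φ.symm 0) with hva_def
  set vb : V := ↑(φ.symm 1) with hvb_def
  have hne' : ∀ u : V, u ∈ H.verts → u ≠ v := fun u hu => by
    rw [hverts] at hu; exact hu
  have hvane : va ≠ v := hne' _ (φ.symm 0).prop
  have hvbne : vb ≠ v := hne' _ (φ.symm 1).prop
  have hab : va ≠ vb := by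
    intro hcon
    exact h01 (φ.symm.injective (Subtype.ext hcon))
  have hchar : ∀ u w : V, H.Adj u w ↔
      (u ≠ w ∧ u ≠ v ∧ w ≠ v ∧ s(u, w) ≠ s(va, vb)) := by
    intro u w
    constructor
    · intro hadj
      have hu : u ∈ H.verts := H.edge_vert hadj
      have hw : w ∈ H.verts := H.edge_vert hadj.symm
      have hune : u ≠ v := by rw [hverts] at hu; exact hu
      have hwne : w ≠ v := by rw [hverts] at hw; exact hw
      have hco : H.coe.Adj ⟨u, hu⟩ ⟨w, hw⟩ := hadj
      have hcm := φ.map_adj_iff.mpr hco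
      rw [compMinusEdge_adj] at hcm
      refine ⟨(H.adj_sub hadj).ne, hune, hwne, fun hs => hcm.2 ?_⟩
      rcases Sym2.eq_iff.mp hs with ⟨hh1, hh2⟩ | ⟨hh1, hh2⟩
      · left
        constructor
        · have : (⟨u, hu⟩ : ↥H.verts) = φ.symm 0 := Subtype.ext hh1
          rw [this]; exact φ.apply_symm_apply _
        · have : (⟨w, hw⟩ : ↥H.verts) = φ.symm 1 := Subtype.ext hh2
          rw [this]; exact φ.apply_symm_apply _
      · right
        constructor
        · have : (⟨w, hw⟩ : ↥H.verts) = φ.symm 0 := Subtype.ext hh2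
          rw [this]; exact φ.apply_symm_apply _
        · have : (⟨u, hu⟩ : ↥H.verts) = φ.symm 1 := Subtype.ext hh1
          rw [this]; exact φ.apply_symm_apply _
    · rintro ⟨hh1, hh2, hh3, hh4⟩
      have hu : u ∈ H.verts := by rw [hverts]; exact hh2
      have hw : w ∈ H.verts := by rw [hverts]; exact hh3
      have hcm : (compMinusEdge (k + 2)).Adj (φ ⟨u, hu⟩) (φ ⟨w, hw⟩) := by
        rw [compMinusEdge_adj]
        refine ⟨fun hc => hh1 (Subtype.ext_iff.mp (φ.injective hc)), ?_⟩
        rintro (⟨c0, c1⟩ | ⟨c0, c1⟩)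
        · apply hh4
          rw [Sym2.eq_iff]
          left
          constructor
          · have : φ.symm 0 = ⟨u, hu⟩ := by rw [← c0]; exact φ.symm_apply_apply _
            rw [hva_def, this]
          · have : φ.symm 1 = ⟨w, hw⟩ := by rw [← c1]; exact φ.symm_apply_apply _
            rw [hvb_def, this]
        · apply hh4
          rw [Sym2.eq_iff]
          right
          constructor
          · have : φ.symm 1 = ⟨u, hu⟩ := by rw [← c1]; exact φ.symm_apply_apply _
            rw [hvb_def, this]
          · have : φ.symm 0 = ⟨w, hw⟩ := by rw [← c0]; exact φ.symm_apply_apply _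
            rw [hva_def, this]
      exact φ.map_adj_iff.mp hcm
  have hT : (v, s(va, vb)) ∈ Tset x := by
    rw [mem_Tset]
    refine ⟨fun hdg => hab (Sym2.mk_isDiag_iff.mp hdg) , ?_, ?_⟩
    · intro hmem
      rcases Sym2.mem_iff.mp hmem with hc | hc
      · exact hvane hc.symm
      · exact hvbne hc.symm
    · intro u w h1 h2 h3 h4
      exact x.adj_symm ((H.adj_sub ((hchar u w).mpr ⟨h1, h2, h3, h4⟩))) |>.symm
  refine ⟨⟨(v, s(va, vb)), hT⟩, ?_⟩
  apply Subtype.ext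
  show mkSub x v s(va, vb) hT = H
  apply SimpleGraph.Subgraph.ext
  · show {u : V | u ≠ v} = H.verts
    rw [hverts]
  · funext u w
    apply propext
    rw [mkSub_adj]
    exact (hchar u w).symm

lemma lemA (x : SimpleGraph V) {k : ℕ} (hV : Fintype.card V = k + 3) :
    subCount (compMinusEdge (k + 2)) x = (Tset x).card := by
  have hbij : Function.Bijective (gMap x hV) :=
    ⟨gMap_injective x hV, gMap_surjective x hV⟩
  have hcard := Nat.card_eq_of_bijective _ hbij
  rw [subCount, ← hcard, Nat.card_eq_fintype_card, Fintype.card_coe]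

/-! ### Part B : the count `(Tset x).card` only depends on the degree distribution -/

lemma deg_eq (x : SimpleGraph V) (v : V) :
    deg x v = (univ.filter fun u => x.Adj v u).card := by
  rw [deg, Nat.card_eq_fintype_card, Fintype.card_subtype]

lemma nDeg_eq (x : SimpleGraph V) (j : ℕ) :
    nDeg x j = (univ.filter fun v => deg x v = j).card := by
  rw [nDeg, Nat.card_eq_fintype_card, Fintype.card_subtype]

lemma deg_lt (x : SimpleGraph V) (v : V) : deg x v < Fintype.card V := by
  rw [deg_eq]
  have hsub : (univ.filter fun u => x.Adj v u) ⊆ univ.erase v := by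
    intro u hu
    rw [Finset.mem_erase]
    exact ⟨(Finset.mem_filter.mp hu).2.ne', mem_univ u⟩
  have h1 := Finset.card_le_card hsub
  have h2 : (univ.erase v).card = Fintype.card V - 1 := by
    rw [Finset.card_erase_of_mem (mem_univ v), Finset.card_univ]
  have h3 : 0 < Fintype.card V := Fintype.card_pos_iff.mpr ⟨v⟩
  omega

/-- The complement-degree of `v`. -/
noncomputable def cdeg (x : SimpleGraph V) (v : V) : ℕ :=
  (univ.filter fun u => u ≠ v ∧ ¬x.Adj v u).card

lemma deg_add_cdeg (x : SimpleGraph V) (v : V) :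
    deg x v + cdeg x v = Fintype.card V - 1 := by
  rw [deg_eq, cdeg]
  have hdis : Disjoint (univ.filter fun u => x.Adj v u)
      (univ.filter fun u => u ≠ v ∧ ¬x.Adj v u) := by
    rw [Finset.disjoint_filter]
    intro u _ hadj hcon
    exact hcon.2 hadj
  rw [← Finset.card_union_of_disjoint hdis, ← Finset.filter_or]
  have : (univ.filter fun u => x.Adj v u ∨ u ≠ v ∧ ¬x.Adj v u)
      = univ.filter fun u => u ≠ v := by
    apply Finset.filter_congr
    intro u _
    constructor
    · rintro (hadj | ⟨hne, _⟩)
      · exact hadj.ne'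
      · exact hne
    · intro hne
      by_cases hadj : x.Adj v u
      · exact Or.inl hadj
      · exact Or.inr ⟨hne, hadj⟩
  rw [this, Finset.filter_ne' univ v, Finset.card_erase_of_mem (mem_univ v),
    Finset.card_univ]

/-- Number of non-diagonal pairs. -/
noncomputable def npairs (V : Type*) [Fintype V] [DecidableEq V] : ℕ :=
  ((univ : Finset (Sym2 V)).filter fun p => ¬p.IsDiag).card

/-- Non-edges of `x` (as a Finset of pairs). -/
noncomputable def cedges (x : SimpleGraph V) : Finset (Sym2 V) :=
  univ.filter fun p => ¬p.IsDiag ∧ p ∉ x.edgeSet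

/-- Non-edges of `x` avoiding `v`. -/
noncomputable def mis (x : SimpleGraph V) (v : V) : Finset (Sym2 V) :=
  univ.filter fun p => ¬p.IsDiag ∧ v ∉ p ∧ p ∉ x.edgeSet

/-- Non-diagonal pairs avoiding `v`. -/
noncomputable def allp (v : V) : Finset (Sym2 V) :=
  univ.filter fun p => ¬p.IsDiag ∧ v ∉ p

lemma card_through (v : V) (Q : Sym2 V → Prop) [DecidablePred Q] :
    (univ.filter fun u : V => u ≠ v ∧ Q s(v, u)).card
      = (univ.filter fun p : Sym2 V => ¬p.IsDiag ∧ v ∈ p ∧ Q p).card := by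
  apply Finset.card_bij (fun u _ => s(v, u))
  · intro u hu
    obtain ⟨hne, hQ⟩ := (Finset.mem_filter.mp hu).2
    refine Finset.mem_filter.mpr ⟨mem_univ _, ?_, ?_, hQ⟩
    · exact fun hd => hne (Sym2.mk_isDiag_iff.mp hd).symm
    · exact Sym2.mem_iff.mpr (Or.inl rfl)
  · intro u1 hu1 u2 hu2 hEq
    rcases Sym2.eq_iff.mp hEq with ⟨_, h⟩ | ⟨h1, h2⟩
    · exact h
    · exact absurd h2 (Finset.mem_filter.mp hu1).2.1
  · intro p hp
    obtain ⟨hd, hvp, hQ⟩ := (Finset.mem_filter.mp hp).2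
    obtain ⟨u, rfl⟩ := Sym2.mem_iff_exists.mp hvp
    have hne : u ≠ v := fun hcon => hd (Sym2.mk_isDiag_iff.mpr hcon.symm)
    exact ⟨u, Finset.mem_filter.mpr ⟨mem_univ _, hne, hQ⟩, rfl⟩

lemma split_pairs (v : V) (R : Sym2 V → Prop) [DecidablePred R] :
    ((univ : Finset (Sym2 V)).filter fun p => R p).card
      = ((univ : Finset (Sym2 V)).filter fun p => R p ∧ v ∉ p).card
        + ((univ : Finset (Sym2 V)).filter fun p => R p ∧ v ∈ p).card := by
  have h := Finset.card_filter_add_card_filter_not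
    (s := (univ : Finset (Sym2 V)).filter fun p => R p) (p := fun p => v ∈ p)
  simp only [Finset.filter_filter, Finset.filter_congr_decidable] at h ⊢
  omega

lemma allp_card (v : V) :
    (allp v).card + (Fintype.card V - 1) = npairs V := by
  rw [npairs, split_pairs v (fun p => ¬p.IsDiag)]
  have h1 : ((univ : Finset (Sym2 V)).filter fun p => ¬p.IsDiag ∧ v ∉ p) = allp v := rfl
  have h2 : ((univ : Finset (Sym2 V)).filter fun p => ¬p.IsDiag ∧ v ∈ p).card
      = Fintype.card V - 1 := by
    rw [show ((univ : Finset (Sym2 V)).filter fun p => ¬p.IsDiag ∧ v ∈ p)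
        = (univ.filter fun p : Sym2 V => ¬p.IsDiag ∧ v ∈ p ∧ True) by simp]
    rw [← card_through v (fun _ => True)]
    rw [show (univ.filter fun u : V => u ≠ v ∧ True) = univ.filter fun u : V => u ≠ v
        by simp]
    rw [Finset.filter_ne' univ v, Finset.card_erase_of_mem (mem_univ v),
      Finset.card_univ]
  rw [h1, h2]

lemma mis_card_aux (x : SimpleGraph V) (v : V) :
    (mis x v).card + cdeg x v = (cedges x).card := by
  rw [cedges, split_pairs v (fun p => ¬p.IsDiag ∧ p ∉ x.edgeSet)]
  have h1 : ((univ : Finset (Sym2 V)).filter fun p => (¬p.IsDiag ∧ p ∉ x.edgeSet) ∧ v ∉ p)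
      = mis x v := by
    rw [mis]
    apply Finset.filter_congr
    intro p _
    tauto
  have h2 : ((univ : Finset (Sym2 V)).filter fun p => (¬p.IsDiag ∧ p ∉ x.edgeSet) ∧ v ∈ p).card
      = cdeg x v := by
    rw [show ((univ : Finset (Sym2 V)).filter fun p => (¬p.IsDiag ∧ p ∉ x.edgeSet) ∧ v ∈ p)
        = (univ.filter fun p : Sym2 V => ¬p.IsDiag ∧ v ∈ p ∧ p ∉ x.edgeSet) by
      apply Finset.filter_congr; intro p _; tauto]
    rw [← card_through v (fun p => p ∉ x.edgeSet), cdeg,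
      show ((univ : Finset V).filter fun u => u ≠ v ∧ s(v, u) ∉ x.edgeSet)
          = (univ : Finset V).filter fun u => u ≠ v ∧ ¬x.Adj v u by
        apply Finset.filter_congr
        intro u _
        simp [SimpleGraph.mem_edgeSet]]
  rw [h1, h2]

lemma mis_card_key (x : SimpleGraph V) (v : V) :
    (mis x v).card + (Fintype.card V - 1) = deg x v + (cedges x).card := by
  have h1 := mis_card_aux x v
  have h2 := deg_add_cdeg x v
  omega

/-- The per-vertex count. -/
noncomputable def cset (x : SimpleGraph V) (v : V) : Finset (Sym2 V) :=
  univ.filter fun p => ¬p.IsDiag ∧ v ∉ p ∧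
    ∀ u w : V, u ≠ w → u ≠ v → w ≠ v → s(u, w) ≠ p → x.Adj u w

lemma Tset_card (x : SimpleGraph V) :
    (Tset x).card = ∑ v : V, (cset x v).card := by
  rw [Finset.card_eq_sum_card_fiberwise
    (f := Prod.fst) (t := univ) (fun q _ => mem_univ q.1)]
  refine Finset.sum_congr rfl fun v _ => ?_
  have himg : (Tset x).filter (fun q => q.1 = v) = (cset x v).image (fun p => (v, p)) := by
    ext ⟨v', p⟩
    simp only [Tset, cset, Finset.mem_filter, Finset.mem_univ, true_and,
      Finset.mem_image, Prod.mk.injEq]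
    constructor
    · rintro ⟨⟨hd, hv, hall⟩, rfl⟩
      exact ⟨p, ⟨hd, hv, hall⟩, rfl, rfl⟩
    · rintro ⟨p', ⟨hd, hv, hall⟩, rfl, rfl⟩
      exact ⟨⟨hd, hv, hall⟩, rfl⟩
  rw [himg, Finset.card_image_of_injective _ (fun p1 p2 h => (Prod.ext_iff.mp h).2)]

lemma cset_eq (x : SimpleGraph V) (v : V) :
    cset x v = (allp v).filter fun p => mis x v ⊆ {p} := by
  ext p
  rw [cset, allp, Finset.mem_filter, Finset.mem_filter, Finset.mem_filter]
  constructor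
  · rintro ⟨hu, hd, hv, hall⟩
    refine ⟨⟨hu, hd, hv⟩, ?_⟩
    intro q hq
    obtain ⟨qd, qv, qe⟩ := (Finset.mem_filter.mp hq).2
    rw [Finset.mem_singleton]
    by_contra hne
    obtain ⟨a, b, rfl⟩ := sym2_exists q
    have hab : a ≠ b := fun hcon => qd (Sym2.mk_isDiag_iff.mpr hcon)
    have ha : a ≠ v := fun hcon => qv (Sym2.mem_iff.mpr (Or.inl hcon.symm))
    have hb : b ≠ v := fun hcon => qv (Sym2.mem_iff.mpr (Or.inr hcon.symm))
    exact qe ((SimpleGraph.mem_edgeSet x).mpr (hall a b hab ha hb hne))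
  · rintro ⟨⟨hu, hd, hv⟩, hsub⟩
    refine ⟨hu, hd, hv, ?_⟩
    intro u w h1 h2 h3 h4
    by_contra hadj
    have hmem : s(u, w) ∈ mis x v := by
      refine Finset.mem_filter.mpr ⟨mem_univ _, ?_, ?_, ?_⟩
      · exact fun hdg => h1 (Sym2.mk_isDiag_iff.mp hdg)
      · intro hc
        rcases Sym2.mem_iff.mp hc with hc | hc
        · exact h2 hc.symm
        · exact h3 hc.symm
      · exact fun hc => hadj ((SimpleGraph.mem_edgeSet x).mp hc)
    exact h4 (Finset.mem_singleton.mp (hsub hmem))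

/-- The universal counting function. -/
def Ffun (A : ℕ) (m : ℕ) : ℕ := if m = 0 then A else if m = 1 then 1 else 0

lemma cset_card (x : SimpleGraph V) (v : V) :
    (cset x v).card = Ffun ((allp v).card) ((mis x v).card) := by
  rw [cset_eq]
  by_cases h0 : (mis x v).card = 0
  · have hemp : mis x v = ∅ := Finset.card_eq_zero.mp h0
    rw [hemp, Finset.filter_true_of_mem (fun p _ => Finset.empty_subset _)]
    simp [Ffun]
  · by_cases h1 : (mis x v).card = 1
    · obtain ⟨q, hq⟩ := Finset.card_eq_one.mp h1
      have hqmem : q ∈ mis x v := hq ▸ Finset.mem_singleton_self q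
      obtain ⟨qd, qv, _⟩ := (Finset.mem_filter.mp hqmem).2
      have hqallp : q ∈ allp v := Finset.mem_filter.mpr ⟨mem_univ _, qd, qv⟩
      have hflt : (allp v).filter (fun p => mis x v ⊆ {p}) = {q} := by
        ext r
        rw [Finset.mem_filter, hq, Finset.mem_singleton]
        constructor
        · rintro ⟨_, hsub⟩
          exact (Finset.mem_singleton.mp (hsub (Finset.mem_singleton_self q))).symm
        · rintro rfl
          exact ⟨hqallp, Finset.Subset.refl _⟩
      rw [hflt, Finset.card_singleton, Ffun, h1]
      simp
    · have h2 : 2 ≤ (mis x v).card := by omega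
      obtain ⟨q1, hq1, q2, hq2, hq12⟩ := Finset.one_lt_card.mp h2
      have hflt : (allp v).filter (fun p => mis x v ⊆ {p}) = ∅ := by
        rw [Finset.filter_eq_empty_iff]
        intro p _ hsub
        exact hq12 ((Finset.mem_singleton.mp (hsub hq1)).trans
          (Finset.mem_singleton.mp (hsub hq2)).symm)
      rw [hflt, Finset.card_empty, Ffun]
      simp [h0, h1]

lemma degree_eq_deg (x : SimpleGraph V) (v : V) : x.degree v = deg x v := by
  rw [← SimpleGraph.card_neighborFinset_eq_degree, SimpleGraph.neighborFinset_eq_filter,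
    deg_eq]

lemma sum_deg_eq (x y : SimpleGraph V) (hdeg : ∀ j : ℕ, nDeg x j = nDeg y j) :
    ∑ v : V, deg x v = ∑ v : V, deg y v := by
  have key : ∀ z : SimpleGraph V,
      ∑ v : V, deg z v = ∑ j ∈ range (Fintype.card V), nDeg z j * j := by
    intro z
    rw [← Finset.sum_fiberwise_of_maps_to
      (g := deg z) (t := range (Fintype.card V))
      (fun v _ => Finset.mem_range.mpr (deg_lt z v)) (deg z)]
    refine Finset.sum_congr rfl fun j _ => ?_
    rw [Finset.sum_congr rfl (fun v hv => (Finset.mem_filter.mp hv).2),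
      Finset.sum_const, smul_eq_mul, nDeg_eq]
  rw [key x, key y]
  exact Finset.sum_congr rfl fun j _ => by rw [hdeg j]

lemma split_pairs_edge_aux (z : SimpleGraph V) :
    (cedges z).card + z.edgeFinset.card = npairs V := by
  have h := Finset.card_filter_add_card_filter_not
    (s := (univ : Finset (Sym2 V)).filter fun p => ¬p.IsDiag)
    (p := fun p => p ∈ z.edgeSet)
  simp only [Finset.filter_filter, Finset.filter_congr_decidable] at h
  have h1 : ((univ : Finset (Sym2 V)).filter fun p => ¬p.IsDiag ∧ p ∈ z.edgeSet)
      = z.edgeFinset := by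
    ext p
    rw [Finset.mem_filter, SimpleGraph.mem_edgeFinset]
    constructor
    · rintro ⟨_, _, h⟩
      exact h
    · intro h
      exact ⟨Finset.mem_univ _, SimpleGraph.not_isDiag_of_mem_edgeSet z h, h⟩
  have h2 : ((univ : Finset (Sym2 V)).filter fun p => ¬p.IsDiag ∧ ¬p ∈ z.edgeSet)
      = cedges z := rfl
  rw [h1, h2] at h
  rw [npairs]
  omega

lemma cedges_card_eq (x y : SimpleGraph V) (hdeg : ∀ j : ℕ, nDeg x j = nDeg y j) :
    (cedges x).card = (cedges y).card := by
  have hedge : ∀ z : SimpleGraph V,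
      (cedges z).card + z.edgeFinset.card = npairs V := by
    intro z
    have h := split_pairs_edge_aux z
    exact h
  have hsum := sum_deg_eq x y hdeg
  have h2 : ∀ z : SimpleGraph V, ∑ v : V, deg z v = 2 * z.edgeFinset.card := by
    intro z
    rw [← SimpleGraph.sum_degrees_eq_twice_card_edges]
    exact Finset.sum_congr rfl fun v _ => (degree_eq_deg z v).symm
  have hx := hedge x
  have hy := hedge y
  have hex := h2 x
  have hey := h2 y
  omega

lemma Tset_card_eq (x y : SimpleGraph V) (hdeg : ∀ j : ℕ, nDeg x j = nDeg y j) :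
    (Tset x).card = (Tset y).card := by
  have hced := cedges_card_eq x y hdeg
  have key : ∀ z : SimpleGraph V,
      (Tset z).card = ∑ j ∈ range (Fintype.card V),
        nDeg z j * Ffun (npairs V - (Fintype.card V - 1))
          ((j + (cedges z).card) - (Fintype.card V - 1)) := by
    intro z
    rw [Tset_card]
    have hterm : ∀ v : V, (cset z v).card
        = Ffun (npairs V - (Fintype.card V - 1))
            ((deg z v + (cedges z).card) - (Fintype.card V - 1)) := by
      intro v
      rw [cset_card]
      have h1 := allp_card (V := V) v
      have h2 := mis_card_key z v
      have hA : (allp v).card = npairs V - (Fintype.card V - 1) := by omega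
      have hm : (mis z v).card
          = (deg z v + (cedges z).card) - (Fintype.card V - 1) := by omega
      rw [hA, hm]
    rw [Finset.sum_congr rfl (fun v _ => hterm v)]
    rw [← Finset.sum_fiberwise_of_maps_to
      (g := deg z) (t := range (Fintype.card V))
      (fun v _ => Finset.mem_range.mpr (deg_lt z v))]
    refine Finset.sum_congr rfl fun j _ => ?_
    rw [Finset.sum_congr rfl (fun v hv => by rw [(Finset.mem_filter.mp hv).2]),
      Finset.sum_const, smul_eq_mul, nDeg_eq]
  rw [key x, key y, hced]
  exact Finset.sum_congr rfl fun j _ => by rw [hdeg j]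

end Aux

/-- If `|N| = n ≥ 3` and `x`, `y` are simple graphs on `N` with identical
degree distributions, then they contain the same number of subgraphs isomorphic to
`K_{n−1}` with one edge removed. -/
theorem stmt7 {V : Type*} [Fintype V] [DecidableEq V] (hn : 3 ≤ Fintype.card V)
    (x y : SimpleGraph V) (hdeg : ∀ j : ℕ, nDeg x j = nDeg y j) :
    subCount (compMinusEdge (Fintype.card V - 1)) x
      = subCount (compMinusEdge (Fintype.card V - 1)) y := by
  obtain ⟨k, hV⟩ : ∃ k, Fintype.card V = k + 3 := ⟨Fintype.card V - 3, by omega⟩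
  have hm : Fintype.card V - 1 = k + 2 := by omega
  rw [hm, lemA x hV, lemA y hV, Tset_card_eq x y hdeg]
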